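/- Impossibility of separate source-channel coding in Example 1. Let (S₁, S₂) be binary with P_{S₁,S₂}(0,0) = P_{S₁,S₂}(0,1) = P_{S₁,S₂}(1,1) = 1/3 and P_{S₁,S₂}(1,0) = 0, so that H(S₁ | S₂) = H(S₂ | S₁) = 2/3 bits. Consider the binary DM-TWC defined by Y₁ = X₁ ⊕ X₂ ⊕ Z and Y₂ = X₁ · X₂, where ⊕ is mod-2 addition and Z is Bernoulli(0.05) noise independent of (X₁, X₂). Then there exists no pair of independent binary random variables (X₁, X₂) such that both H(S₁ | S₂) < I(X₁; Y₂ | X₂) and H(S₂ | S₁) < I(X₂; Y₁ | X₁) hold simultaneously (mutual information in bits); hence no rate-one SSCC scheme of the form in special case (iii) can attain the distortion pair (0, 0) under Hamming distortion. -/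

import Mathlib

open Finset

/-- Conditional mutual information `I(A;B|C)` of the joint pmf `p` on `α × β × γ`
(natural logarithm). -/
noncomputable def condMI {α β γ : Type} [Fintype α] [Fintype β] [Fintype γ]
    (p : α → β → γ → ℝ) : ℝ :=
  ∑ a, ∑ b, ∑ c, p a b c *
    Real.log ((p a b c * (∑ a', ∑ b', p a' b' c)) /
      ((∑ b', p a b' c) * (∑ a', p a' b c)))

/-- Conditional entropy `H(A|B)` of the joint pmf `p` on `α × β`. -/
noncomputable def condEnt {α β : Type} [Fintype α] [Fintype β]
    (p : α → β → ℝ) : ℝ :=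
  -∑ a, ∑ b, p a b * Real.log (p a b / (∑ a', p a' b))

/-- Mutual information `I(A;B)` of the joint pmf `p` on `α × β`. -/
noncomputable def mutInf {α β : Type} [Fintype α] [Fintype β]
    (p : α → β → ℝ) : ℝ :=
  ∑ a, ∑ b, p a b * Real.log (p a b / ((∑ b', p a b') * (∑ a', p a' b)))

/-- An `(n,k)` joint source-channel code for a two-way channel: encoders
`X_{j,i} = f_{j,i}(S_j^k, Y_j^{i-1})` and decoders `Ŝ₂^k = g₁(S₁^k, Y₁^n)`,
`Ŝ₁^k = g₂(S₂^k, Y₂^n)`. -/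
structure JSCC (S1 S2 X1 X2 Y1 Y2 R1 R2 : Type) (n k : ℕ) where
  enc1 : (i : Fin n) → (Fin k → S1) → (Fin i.1 → Y1) → X1
  enc2 : (i : Fin n) → (Fin k → S2) → (Fin i.1 → Y2) → X2
  dec1 : (Fin k → S1) → (Fin n → Y1) → Fin k → R2
  dec2 : (Fin k → S2) → (Fin n → Y2) → Fin k → R1

/-- The strict prefix `y^{i-1}` of a sequence `y^n`. -/
def prefixOf {n : ℕ} {α : Type} (y : Fin n → α) (i : Fin n) : Fin i.1 → α :=
  fun j => y ⟨j.1, j.2.trans i.2⟩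

/-- Joint pmf of `(S₁^k, S₂^k, Y₁^n, Y₂^n)` induced by a memoryless source `pS`,
a memoryless two-way channel `W` and an `(n,k)` code `C`. -/
noncomputable def codeJoint {S1 S2 X1 X2 Y1 Y2 R1 R2 : Type} {n k : ℕ}
    (pS : S1 → S2 → ℝ) (W : X1 → X2 → Y1 → Y2 → ℝ)
    (C : JSCC S1 S2 X1 X2 Y1 Y2 R1 R2 n k)
    (s1 : Fin k → S1) (s2 : Fin k → S2) (y1 : Fin n → Y1) (y2 : Fin n → Y2) : ℝ :=
  (∏ m, pS (s1 m) (s2 m)) *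
    ∏ i, W (C.enc1 i s1 (prefixOf y1 i)) (C.enc2 i s2 (prefixOf y2 i)) (y1 i) (y2 i)

/-- Expected average distortion of user 1's source reconstructed at user 2. -/
noncomputable def expDist1 {S1 S2 X1 X2 Y1 Y2 R1 R2 : Type}
    [Fintype S1] [Fintype S2] [Fintype Y1] [Fintype Y2] {n k : ℕ}
    (pS : S1 → S2 → ℝ) (W : X1 → X2 → Y1 → Y2 → ℝ)
    (C : JSCC S1 S2 X1 X2 Y1 Y2 R1 R2 n k) (d1 : S1 → R1 → ℝ) : ℝ :=
  ∑ s1 : Fin k → S1, ∑ s2 : Fin k → S2, ∑ y1 : Fin n → Y1, ∑ y2 : Fin n → Y2,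
    codeJoint pS W C s1 s2 y1 y2 * ((k : ℝ)⁻¹ * ∑ m, d1 (s1 m) (C.dec2 s2 y2 m))

/-- Expected average distortion of user 2's source reconstructed at user 1. -/
noncomputable def expDist2 {S1 S2 X1 X2 Y1 Y2 R1 R2 : Type}
    [Fintype S1] [Fintype S2] [Fintype Y1] [Fintype Y2] {n k : ℕ}
    (pS : S1 → S2 → ℝ) (W : X1 → X2 → Y1 → Y2 → ℝ)
    (C : JSCC S1 S2 X1 X2 Y1 Y2 R1 R2 n k) (d2 : S2 → R2 → ℝ) : ℝ :=
  ∑ s1 : Fin k → S1, ∑ s2 : Fin k → S2, ∑ y1 : Fin n → Y1, ∑ y2 : Fin n → Y2,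
    codeJoint pS W C s1 s2 y1 y2 * ((k : ℝ)⁻¹ * ∑ m, d2 (s2 m) (C.dec1 s1 y1 m))

/-- `(D₁, D₂)` is achievable at rate one: there is a sequence of `(n,n)` codes whose
limsup expected distortions are at most `D₁` and `D₂`. -/
def achievableRateOne {S1 S2 X1 X2 Y1 Y2 R1 R2 : Type}
    [Fintype S1] [Fintype S2] [Fintype Y1] [Fintype Y2]
    (pS : S1 → S2 → ℝ) (W : X1 → X2 → Y1 → Y2 → ℝ)
    (d1 : S1 → R1 → ℝ) (d2 : S2 → R2 → ℝ) (D1 D2 : ℝ) : Prop :=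
  ∃ C : (n : ℕ) → JSCC S1 S2 X1 X2 Y1 Y2 R1 R2 n n,
    Filter.limsup (fun n => expDist1 pS W (C n) d1) Filter.atTop ≤ D1 ∧
    Filter.limsup (fun n => expDist2 pS W (C n) d2) Filter.atTop ≤ D2

/-- The achievable distortion region at rate one: the convex closure of the set of
achievable distortion pairs. -/
noncomputable def distRegionRateOne {S1 S2 X1 X2 Y1 Y2 R1 R2 : Type}
    [Fintype S1] [Fintype S2] [Fintype Y1] [Fintype Y2]
    (pS : S1 → S2 → ℝ) (W : X1 → X2 → Y1 → Y2 → ℝ)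
    (d1 : S1 → R1 → ℝ) (d2 : S2 → R2 → ℝ) : Set (ℝ × ℝ) :=
  closure (convexHull ℝ
    {p : ℝ × ℝ | achievableRateOne pS W d1 d2 p.1 p.2})

/-- `(D₁, D₂)` is achievable at rate `R`: there is a sequence of `(n_k, k)` codes with
`k / n_k → R` whose limsup expected distortions are at most `D₁` and `D₂`. -/
def achievableAtRate {S1 S2 X1 X2 Y1 Y2 R1 R2 : Type}
    [Fintype S1] [Fintype S2] [Fintype Y1] [Fintype Y2]
    (pS : S1 → S2 → ℝ) (W : X1 → X2 → Y1 → Y2 → ℝ)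
    (d1 : S1 → R1 → ℝ) (d2 : S2 → R2 → ℝ) (R D1 D2 : ℝ) : Prop :=
  ∃ (nOf : ℕ → ℕ) (C : (k : ℕ) → JSCC S1 S2 X1 X2 Y1 Y2 R1 R2 (nOf k) k),
    Filter.Tendsto (fun k : ℕ => (k : ℝ) / (nOf k : ℝ)) Filter.atTop (nhds R) ∧
    Filter.limsup (fun k => expDist1 pS W (C k) d1) Filter.atTop ≤ D1 ∧
    Filter.limsup (fun k => expDist2 pS W (C k) d2) Filter.atTop ≤ D2

/-- Conditional rate-distortion function `R_{A|B}(D)`: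
the infimum of `I(A; Â | B)` over test channels `P_{Â|A,B}` meeting distortion `D`. -/
noncomputable def condRD {A B H : Type} [Fintype A] [Fintype B] [Fintype H]
    (p : A → B → ℝ) (d : A → H → ℝ) (D : ℝ) : ℝ :=
  sInf { r : ℝ | ∃ q : A → B → H → ℝ,
    (∀ a b h, 0 ≤ q a b h) ∧ (∀ a b, ∑ h, q a b h = 1) ∧
    (∑ a, ∑ b, ∑ h, p a b * q a b h * d a h) ≤ D ∧
    r = condMI (fun a h b => p a b * q a b h) }

/-- Wyner-Ziv rate-distortion function of source `A` with side information `B`. -/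
noncomputable def wzRD {A B H : Type} [Fintype A] [Fintype B] [Fintype H]
    (p : A → B → ℝ) (d : A → H → ℝ) (D : ℝ) : ℝ :=
  sInf { r : ℝ | ∃ (nW : ℕ) (qW : A → Fin nW → ℝ) (g : B → Fin nW → H),
    (∀ a w, 0 ≤ qW a w) ∧ (∀ a, ∑ w, qW a w = 1) ∧
    (∑ a, ∑ b, ∑ w, p a b * qW a w * d a (g b w)) ≤ D ∧
    r = condMI (fun a (w : Fin nW) b => p a b * qW a w) }

/-- Standard rate-distortion function of source `A`. -/
noncomputable def stdRD {A H : Type} [Fintype A] [Fintype H]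
    (p : A → ℝ) (d : A → H → ℝ) (D : ℝ) : ℝ :=
  sInf { r : ℝ | ∃ q : A → H → ℝ,
    (∀ a h, 0 ≤ q a h) ∧ (∀ a, ∑ h, q a h = 1) ∧
    (∑ a, ∑ h, p a * q a h * d a h) ≤ D ∧
    r = mutInf (fun a h => p a * q a h) }

/-- `I(X₁; Y₂ | X₂)` under joint input distribution `Q` and channel `W`. -/
noncomputable def chCMI12 {X1 X2 Y1 Y2 : Type}
    [Fintype X1] [Fintype X2] [Fintype Y1] [Fintype Y2]
    (Q : X1 → X2 → ℝ) (W : X1 → X2 → Y1 → Y2 → ℝ) : ℝ :=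
  condMI (fun x1 y2 x2 => Q x1 x2 * ∑ y1, W x1 x2 y1 y2)

/-- `I(X₂; Y₁ | X₁)` under joint input distribution `Q` and channel `W`. -/
noncomputable def chCMI21 {X1 X2 Y1 Y2 : Type}
    [Fintype X1] [Fintype X2] [Fintype Y1] [Fintype Y2]
    (Q : X1 → X2 → ℝ) (W : X1 → X2 → Y1 → Y2 → ℝ) : ℝ :=
  condMI (fun x2 y1 x1 => Q x1 x2 * ∑ y2, W x1 x2 y1 y2)

/-- The source distribution of Example 1:
`P(0,0) = P(0,1) = P(1,1) = 1/3`, `P(1,0) = 0`. -/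
noncomputable def exPS : Bool → Bool → ℝ :=
  fun s1 s2 => if s1 && !s2 then 0 else 1/3

/-- The two-way channel of Example 1: `Y₁ = X₁ ⊕ X₂ ⊕ Z`, `Y₂ = X₁ · X₂` with
`Z ~ Bernoulli(0.05)` independent of the inputs. -/
noncomputable def exW : Bool → Bool → Bool → Bool → ℝ :=
  fun x1 x2 y1 y2 =>
    (if y2 = (x1 && x2) then 1 else 0) * (if y1 = xor x1 x2 then 19/20 else 1/20)


private noncomputable def g2 (q : Bool → Bool → ℝ) : ℝ :=
  ∑ a, ∑ b, q a b *
    Real.log ((q a b * (∑ a', ∑ b', q a' b')) / ((∑ b', q a b') * (∑ a', q a' b)))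

private lemma condMI_bool (p : Bool → Bool → Bool → ℝ) :
    condMI p = g2 (fun a b => p a b false) + g2 (fun a b => p a b true) := by
  simp only [condMI, g2, Fintype.sum_bool]; ring

private lemma g2_smul (t : ℝ) (ht : 0 ≤ t) (q : Bool → Bool → ℝ) :
    g2 (fun a b => t * q a b) = t * g2 q := by
  rcases ht.eq_or_lt with h|h
  · simp [g2, ← h]
  · have ht2 : t^2 ≠ 0 := by positivity
    have key : ∀ x s u v : ℝ, (t*x * (t*s)) / ((t*u)*(t*v)) = x*s/(u*v) := by
      intro x s u v
      rw [show t*x*(t*s) = t^2*(x*s) by ring, show (t*u)*(t*v) = t^2*(u*v) by ring,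
        mul_div_mul_left _ _ ht2]
    simp only [g2, Fintype.sum_bool]
    rw [show t * q true true + t * q true false = t*(q true true + q true false) by ring,
        show t * q false true + t * q false false = t*(q false true + q false false) by ring,
        show t*(q true true + q true false) + t*(q false true + q false false)
           = t*((q true true + q true false) + (q false true + q false false)) by ring,
        show t * q true true + t * q false true = t*(q true true + q false true) by ring,
        show t * q true false + t * q false false = t*(q true false + q false false) by ring]
    rw [key, key, key, key]
    ring

private lemma term_eq (p w m : ℝ) (hp : p ≠ 0) (hw : w ≠ 0) (hm : m ≠ 0) :
    Real.log (p * w * 1 / (p * m)) = Real.log w - Real.log m := by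
  rw [mul_one, show p*w/(p*m) = w/m from mul_div_mul_left _ _ hp, Real.log_div hw hm]

private lemma log_div_self' (x : ℝ) : Real.log (x / x) = 0 := by
  rcases eq_or_ne x 0 with h|h
  · simp [h]
  · simp [div_self h]

private lemma chCMI12_eq (Q1 Q2 : Bool → ℝ) (ha : Q1 false = 1 - Q1 true)
    (hb : Q2 false = 1 - Q2 true) (hb0 : 0 ≤ Q2 true) (hb1 : Q2 true ≤ 1) :
    chCMI12 (fun x1 x2 => Q1 x1 * Q2 x2) exW
      = Q2 true * (-(Q1 true * Real.log (Q1 true))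
          - (1 - Q1 true) * Real.log (1 - Q1 true)) := by
  rw [chCMI12, condMI_bool]
  have e1 : (fun a b => (fun x1 y2 x2 => Q1 x1 * Q2 x2 * ∑ y1, exW x1 x2 y1 y2) a b false)
      = fun x1 y2 => (1 - Q2 true) * (Q1 x1 * (if y2 = false then 1 else 0)) := by
    funext x y; cases x <;> cases y <;> simp [exW, hb, Fintype.sum_bool] <;> ring
  have e2 : (fun a b => (fun x1 y2 x2 => Q1 x1 * Q2 x2 * ∑ y1, exW x1 x2 y1 y2) a b true)
      = fun x1 y2 => Q2 true * (Q1 x1 * (if y2 = x1 then 1 else 0)) := by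
    funext x y; cases x <;> cases y <;> simp [exW, Fintype.sum_bool] <;> ring
  rw [e1, e2, g2_smul _ (by linarith), g2_smul _ hb0]
  have gF : g2 (fun x1 y2 => Q1 x1 * (if y2 = false then 1 else 0)) = 0 := by
    simp [g2, Fintype.sum_bool]
  have gT : g2 (fun x1 y2 => Q1 x1 * (if y2 = x1 then 1 else 0))
      = -(Q1 true * Real.log (Q1 true)) - (1 - Q1 true) * Real.log (1 - Q1 true) := by
    simp [g2, Fintype.sum_bool, ha]
    ring
  rw [gF, gT]; ring

open Real in
private lemma chCMI21_eq (Q1 Q2 : Bool → ℝ) (ha : Q1 false = 1 - Q1 true)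
    (hb : Q2 false = 1 - Q2 true) (ha0 : 0 ≤ Q1 true) (ha1 : Q1 true ≤ 1)
    (hb0 : 0 < Q2 true) (hb1 : Q2 true ≤ 1) :
    chCMI21 (fun x1 x2 => Q1 x1 * Q2 x2) exW
      = binEntropy (1/20 + 9/10 * Q2 true) - binEntropy (1/20) := by
  rw [chCMI21, condMI_bool]
  have e1 : (fun a b => (fun x2 y1 x1 => Q1 x1 * Q2 x2 * ∑ y2, exW x1 x2 y1 y2) a b false)
      = fun x2 y1 => Q1 false * (Q2 x2 * (if y1 = x2 then 19/20 else 1/20)) := by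
    funext x y; cases x <;> cases y <;> simp [exW, Fintype.sum_bool] <;> ring
  have e2 : (fun a b => (fun x2 y1 x1 => Q1 x1 * Q2 x2 * ∑ y2, exW x1 x2 y1 y2) a b true)
      = fun x2 y1 => Q1 true * (Q2 x2 * (if y1 = !x2 then 19/20 else 1/20)) := by
    funext x y; cases x <;> cases y <;> simp [exW, Fintype.sum_bool] <;> ring
  rw [e1, e2, g2_smul _ (by linarith), g2_smul _ ha0]
  rcases hb1.lt_or_eq with hblt | hbeq
  · have hu : (0:ℝ) < 20⁻¹ + 9/10 * Q2 true := by linarith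
    have hu1 : (0:ℝ) < 1 - (20⁻¹ + 9/10 * Q2 true) := by linarith
    have gF : g2 (fun x2 y1 => Q2 x2 * (if y1 = x2 then 19/20 else 1/20))
        = binEntropy (1/20 + 9/10 * Q2 true) - binEntropy (1/20) := by
      simp [g2, Fintype.sum_bool, hb]
      rw [show (Q2 true * (19/20) + Q2 true * 20⁻¹ + ((1 - Q2 true) * 20⁻¹ + (1 - Q2 true) * (19/20))) = (1:ℝ) by ring,
          show Q2 true * (19/20) + Q2 true * 20⁻¹ = Q2 true by ring,
          show (1 - Q2 true) * 20⁻¹ + (1 - Q2 true) * (19/20) = 1 - Q2 true by ring,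
          show Q2 true * (19/20) + (1 - Q2 true) * 20⁻¹ = 20⁻¹ + 9/10 * Q2 true by ring,
          show Q2 true * 20⁻¹ + (1 - Q2 true) * (19/20) = 1 - (20⁻¹ + 9/10 * Q2 true) by ring]
      rw [term_eq _ _ _ hb0.ne' (by norm_num) hu.ne',
          term_eq _ _ _ hb0.ne' (by norm_num) hu1.ne',
          term_eq _ _ _ (by intro h; nlinarith : (1:ℝ) - Q2 true ≠ 0) (by norm_num) hu.ne',
          term_eq _ _ _ (by intro h; nlinarith : (1:ℝ) - Q2 true ≠ 0) (by norm_num) hu1.ne']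
      simp only [Real.binEntropy, Real.log_inv]
      rw [show (1:ℝ) - 20⁻¹ = 19/20 by norm_num]
      ring
    have gT : g2 (fun x2 y1 => Q2 x2 * (if y1 = !x2 then 19/20 else 1/20))
        = binEntropy (1/20 + 9/10 * Q2 true) - binEntropy (1/20) := by
      simp [g2, Fintype.sum_bool, hb]
      rw [show (Q2 true * 20⁻¹ + Q2 true * (19/20) + ((1 - Q2 true) * (19/20) + (1 - Q2 true) * 20⁻¹)) = (1:ℝ) by ring,
          show Q2 true * 20⁻¹ + Q2 true * (19/20) = Q2 true by ring,
          show (1 - Q2 true) * (19/20) + (1 - Q2 true) * 20⁻¹ = 1 - Q2 true by ring,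
          show Q2 true * 20⁻¹ + (1 - Q2 true) * (19/20) = 1 - (20⁻¹ + 9/10 * Q2 true) by ring,
          show Q2 true * (19/20) + (1 - Q2 true) * 20⁻¹ = 20⁻¹ + 9/10 * Q2 true by ring]
      rw [term_eq _ _ _ hb0.ne' (by norm_num) hu1.ne',
          term_eq _ _ _ hb0.ne' (by norm_num) hu.ne',
          term_eq _ _ _ (by intro h; nlinarith : (1:ℝ) - Q2 true ≠ 0) (by norm_num) hu1.ne',
          term_eq _ _ _ (by intro h; nlinarith : (1:ℝ) - Q2 true ≠ 0) (by norm_num) hu.ne']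
      simp only [Real.binEntropy, Real.log_inv]
      rw [show (1:ℝ) - 20⁻¹ = 19/20 by norm_num]
      ring
    rw [gF, gT, ha]; ring
  · have hQ2t : Q2 true = 1 := hbeq
    have gF : g2 (fun x2 y1 => Q2 x2 * (if y1 = x2 then 19/20 else 1/20)) = 0 := by
      simp [g2, Fintype.sum_bool, hb, hQ2t]
      norm_num
    have gT : g2 (fun x2 y1 => Q2 x2 * (if y1 = !x2 then 19/20 else 1/20)) = 0 := by
      simp [g2, Fintype.sum_bool, hb, hQ2t]
      norm_num
    rw [gF, gT, hQ2t]
    rw [show (1:ℝ)/20 + 9/10 * 1 = 1 - 1/20 by norm_num, Real.binEntropy_one_sub]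
    ring

open Real in
private lemma numeric_key : binEntropy (13/20) < 2/3 * Real.log 2 + binEntropy (1/20) := by
  have key : (19:ℝ)^57 < 2^40 * 13^39 * 7^21 := by norm_num
  have hlog := Real.log_lt_log (by positivity) key
  rw [Real.log_pow, Real.log_mul (by positivity) (by positivity),
      Real.log_mul (by positivity) (by positivity),
      Real.log_pow, Real.log_pow, Real.log_pow] at hlog
  push_cast at hlog
  simp only [Real.binEntropy, Real.log_inv]
  rw [show (1:ℝ) - 13/20 = 7/20 by norm_num, show (1:ℝ) - 1/20 = 19/20 by norm_num,
      Real.log_div (by norm_num) (by norm_num), Real.log_div (by norm_num) (by norm_num),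
      Real.log_div (by norm_num) (by norm_num), Real.log_div (by norm_num) (by norm_num),
      Real.log_one]
  have h20 : Real.log 20 = 2 * Real.log 2 + Real.log 5 := by
    rw [show (20:ℝ) = 2^2 * 5 by norm_num, Real.log_mul (by positivity) (by norm_num),
        Real.log_pow]
    push_cast; ring
  linarith

/-- **Impossibility of separate source-channel coding in Example 1.**
For the source of Example 1, `H(S₁|S₂) = H(S₂|S₁) = 2/3` bits, and there is no pair of
independent channel inputs `(X₁, X₂)` such that both `H(S₁|S₂) < I(X₁;Y₂|X₂)` and
`H(S₂|S₁) < I(X₂;Y₁|X₁)` hold for the channel `Y₁ = X₁ ⊕ X₂ ⊕ Z`, `Y₂ = X₁ · X₂`;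
hence no rate-one SSCC scheme attains `(0,0)` under Hamming distortion. -/
theorem example1_sscc_impossibility :
    condEnt exPS = 2/3 * Real.log 2 ∧
    condEnt (fun s2 s1 => exPS s1 s2) = 2/3 * Real.log 2 ∧
    ¬ ∃ (Q1 Q2 : Bool → ℝ),
        (∀ b, 0 ≤ Q1 b) ∧ (∑ b, Q1 b = 1) ∧
        (∀ b, 0 ≤ Q2 b) ∧ (∑ b, Q2 b = 1) ∧
        condEnt exPS < chCMI12 (fun x1 x2 => Q1 x1 * Q2 x2) exW ∧
        condEnt (fun s2 s1 => exPS s1 s2)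
          < chCMI21 (fun x1 x2 => Q1 x1 * Q2 x2) exW := by
  have part1 : condEnt exPS = 2/3 * Real.log 2 := by
    simp [condEnt, exPS, Fintype.sum_bool]
    rw [show (3:ℝ)⁻¹/(3⁻¹+3⁻¹) = 1/2 by norm_num,
      Real.log_div (by norm_num) (by norm_num), Real.log_one]
    ring
  have part2 : condEnt (fun s2 s1 => exPS s1 s2) = 2/3 * Real.log 2 := by
    simp [condEnt, exPS, Fintype.sum_bool]
    rw [show (3:ℝ)⁻¹/(3⁻¹+3⁻¹) = 1/2 by norm_num,
      Real.log_div (by norm_num) (by norm_num), Real.log_one]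
    ring
  refine ⟨part1, part2, ?_⟩
  rintro ⟨Q1, Q2, hQ1, hs1, hQ2, hs2, hI1, hI2⟩
  rw [part1] at hI1
  rw [part2] at hI2
  rw [Fintype.sum_bool] at hs1 hs2
  have ha : Q1 false = 1 - Q1 true := by linarith
  have hb : Q2 false = 1 - Q2 true := by linarith
  have ha0 : 0 ≤ Q1 true := hQ1 true
  have ha1 : Q1 true ≤ 1 := by have := hQ1 false; linarith
  have hb0 : 0 ≤ Q2 true := hQ2 true
  have hb1 : Q2 true ≤ 1 := by have := hQ2 false; linarith
  have hlog2 : (0:ℝ) < Real.log 2 := Real.log_pos (by norm_num)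
  -- from the first inequality, Q2 true > 2/3
  rw [chCMI12_eq Q1 Q2 ha hb hb0 hb1] at hI1
  have hBE : -(Q1 true * Real.log (Q1 true)) - (1 - Q1 true) * Real.log (1 - Q1 true)
      = Real.binEntropy (Q1 true) := by
    rw [Real.binEntropy_eq_negMulLog_add_negMulLog_one_sub]
    simp [Real.negMulLog]; ring
  rw [hBE] at hI1
  have hle : Q2 true * Real.binEntropy (Q1 true) ≤ Q2 true * Real.log 2 :=
    mul_le_mul_of_nonneg_left Real.binEntropy_le_log_two hb0
  have hbgt : 2/3 < Q2 true := by nlinarith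
  -- second inequality
  rw [chCMI21_eq Q1 Q2 ha hb ha0 ha1 (by linarith) hb1] at hI2
  have hu13 : 13/20 < 1/20 + 9/10 * Q2 true := by linarith
  have hmono : Real.binEntropy (1/20 + 9/10 * Q2 true) < Real.binEntropy (13/20) := by
    have h1 : (13/20 : ℝ) ∈ Set.Icc (2⁻¹ : ℝ) 1 := Set.mem_Icc.mpr ⟨by norm_num, by norm_num⟩
    have h2 : (1/20 + 9/10 * Q2 true : ℝ) ∈ Set.Icc (2⁻¹ : ℝ) 1 :=
      Set.mem_Icc.mpr ⟨by linarith, by linarith⟩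
    exact Real.binEntropy_strictAntiOn h1 h2 hu13
  have := numeric_key
  linarith
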